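/- arXiv:2105.03002 — 2 statements merged into one kernel-verified Lean document; each statement's English description precedes it below -/
import Mathlib

section
/- Let Ω ⊆ ℝ² be open, let f : ℝ² → ℝ, and let p : ℝ² → ℝ be twice continuously differentiable with −Δp = f at every point of Ω. Then for every continuously differentiable v : ℝ² → ℝ whose (compact) support is contained in Ω, one has ∫_{ℝ²} ∇v·∇p = ∫_{ℝ²} f·v. (This is the derivation of the weak formulation ∫_Ω ∇v·∇p = ∫_Ω f v from the strong form of the Laplace problem, for test functions vanishing on the boundary.) -/
open MeasureTheory RealInnerProductSpace

noncomputable abbrev E2 : Type := EuclideanSpace ℝ (Fin 2)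

/-- The Laplacian `∂²p/∂x² + ∂²p/∂y²` of `p : ℝ² → ℝ`. -/
noncomputable def laplacian2 (p : E2 → ℝ) (x : E2) : ℝ :=
  ∑ i : Fin 2,
    fderiv ℝ (fun y => fderiv ℝ p y (EuclideanSpace.single i (1 : ℝ))) x
      (EuclideanSpace.single i (1 : ℝ))

theorem weak_formulation_of_strong
    (Ω : Set E2) (hΩ : IsOpen Ω) (f : E2 → ℝ) (p : E2 → ℝ)
    (hp : ContDiff ℝ 2 p) (hpf : ∀ x ∈ Ω, -laplacian2 p x = f x) :
    ∀ v : E2 → ℝ, ContDiff ℝ 1 v → HasCompactSupport v → tsupport v ⊆ Ω →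
      ∫ x : E2, ⟪gradient v x, gradient p x⟫ = ∫ x : E2, f x * v x := by
  intro v hv hcv hsv
  set e : Fin 2 → E2 := fun i => EuclideanSpace.single i (1 : ℝ) with he
  -- first derivatives
  have hvd : Differentiable ℝ v := hv.differentiable one_ne_zero
  have hpd : Differentiable ℝ p := hp.differentiable (by norm_num)
  -- p's directional derivatives are C¹
  have hpi : ∀ i, ContDiff ℝ 1 (fun y => fderiv ℝ p y (e i)) := by
    intro i
    exact (hp.fderiv_right (m := 1) (by norm_num)).clm_apply contDiff_const
  have hvc : ∀ i, Continuous (fun x => fderiv ℝ v x (e i)) :=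
    fun i => (hv.continuous_fderiv one_ne_zero).clm_apply continuous_const
  -- compact supports
  have hcvi : ∀ i, HasCompactSupport (fun x => fderiv ℝ v x (e i)) := by
    intro i
    exact (hcv.fderiv ℝ).comp_left (g := fun L : E2 →L[ℝ] ℝ => L (e i)) rfl
  -- pointwise inner product as a sum
  have hinner : ∀ x : E2, ⟪gradient v x, gradient p x⟫
      = ∑ i : Fin 2, fderiv ℝ v x (e i) * fderiv ℝ p x (e i) := by
    intro x
    have hg : ∀ (g : E2 → ℝ) (i : Fin 2), gradient g x i = fderiv ℝ g x (e i) := by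
      intro g i
      have : ⟪gradient g x, e i⟫ = fderiv ℝ g x (e i) :=
        InnerProductSpace.toDual_symm_apply
      rw [← this, he]; simp only [EuclideanSpace.inner_single_right, map_one, one_mul, starRingEnd_apply, star_trivial]
    rw [PiLp.inner_apply]
    exact Finset.sum_congr rfl fun i _ => by
      simp [hg v i, hg p i, RCLike.inner_apply, starRingEnd_apply]; ring
  -- integrability helpers
  have hint : ∀ (g : E2 → ℝ), Continuous g →
      Integrable (fun x => g x * v x) := by
    intro g hg
    exact (hg.mul hv.continuous).integrable_of_hasCompactSupport (hcv.mul_left)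
  have hint' : ∀ i, Integrable (fun x => fderiv ℝ v x (e i) * fderiv ℝ p x (e i)) := by
    intro i
    exact ((hvc i).mul ((hpi i).continuous)).integrable_of_hasCompactSupport
      ((hcvi i).mul_right)
  -- integration by parts in each direction
  have IBP : ∀ i : Fin 2,
      ∫ x, fderiv ℝ v x (e i) * fderiv ℝ p x (e i)
        = - ∫ x, fderiv ℝ (fun y => fderiv ℝ p y (e i)) x (e i) * v x := by
    intro i
    have h1 : Integrable (fun x => fderiv ℝ (fun y => fderiv ℝ p y (e i)) x (e i) * v x) :=
      hint _ (((hpi i).continuous_fderiv one_ne_zero).clm_apply continuous_const)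
    have h2 : Integrable (fun x => (fun y => fderiv ℝ p y (e i)) x * fderiv ℝ v x (e i))
        volume :=
      ((hpi i).continuous.mul (hvc i)).integrable_of_hasCompactSupport ((hcvi i).mul_left)
    have h3 : Integrable (fun x => (fun y => fderiv ℝ p y (e i)) x * v x) :=
      hint _ (hpi i).continuous
    have := integral_mul_fderiv_eq_neg_fderiv_mul_of_integrable
      (f := fun y => fderiv ℝ p y (e i)) (g := v) (v := e i) (μ := volume)
      h1 h2 h3 (fun x _ => (hpi i).differentiable one_ne_zero x) (fun x _ => hvd x)
    calc ∫ x, fderiv ℝ v x (e i) * fderiv ℝ p x (e i)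
        = ∫ x, fderiv ℝ p x (e i) * fderiv ℝ v x (e i) := by
          congr 1; ext x; ring
      _ = - ∫ x, fderiv ℝ (fun y => fderiv ℝ p y (e i)) x (e i) * v x := this
  -- pointwise identity on the right-hand side
  have hrhs : ∀ x : E2, f x * v x
      = ∑ i : Fin 2, -(fderiv ℝ (fun y => fderiv ℝ p y (e i)) x (e i) * v x) := by
    intro x
    by_cases hx : x ∈ tsupport v
    · have := hpf x (hsv hx)
      have : f x = -laplacian2 p x := this.symm
      rw [this, laplacian2]
      simp only [he, Fin.sum_univ_two, neg_mul, neg_add_rev]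
      ring
    · have hvx : v x = 0 := image_eq_zero_of_notMem_tsupport hx
      simp [hvx]
  calc ∫ x : E2, ⟪gradient v x, gradient p x⟫
      = ∫ x, ∑ i : Fin 2, fderiv ℝ v x (e i) * fderiv ℝ p x (e i) := by
        exact integral_congr_ae (Filter.Eventually.of_forall hinner)
    _ = ∑ i : Fin 2, ∫ x, fderiv ℝ v x (e i) * fderiv ℝ p x (e i) :=
        integral_finset_sum _ fun i _ => hint' i
    _ = ∑ i : Fin 2, - ∫ x, fderiv ℝ (fun y => fderiv ℝ p y (e i)) x (e i) * v x :=
        Finset.sum_congr rfl fun i _ => IBP i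
    _ = ∑ i : Fin 2, ∫ x, -(fderiv ℝ (fun y => fderiv ℝ p y (e i)) x (e i) * v x) := by
        simp [integral_neg]
    _ = ∫ x, ∑ i : Fin 2, -(fderiv ℝ (fun y => fderiv ℝ p y (e i)) x (e i) * v x) := by
        refine (integral_finset_sum _ fun i _ => ?_).symm
        exact (hint _ (((hpi i).continuous_fderiv one_ne_zero).clm_apply continuous_const)).neg
    _ = ∫ x : E2, f x * v x := by
        exact integral_congr_ae (Filter.Eventually.of_forall fun x => (hrhs x).symm)
end

section
/- Let a₁ < b₁ and a₂ < b₂ be real numbers and let R = [a₁,b₁] × [a₂,b₂] ⊆ ℝ². Let p : ℝ² → ℝ be twice continuously differentiable and v : ℝ² → ℝ continuously differentiable. Then −∫_R (Δp)·v = ∫_R ∇v·∇p − ( ∫_{a₂}^{b₂} v(b₁,y)·∂p/∂x(b₁,y) dy − ∫_{a₂}^{b₂} v(a₁,y)·∂p/∂x(a₁,y) dy + ∫_{a₁}^{b₁} v(x,b₂)·∂p/∂y(x,b₂) dx − ∫_{a₁}^{b₁} v(x,a₂)·∂p/∂y(x,a₂) dx ). (This is Green's formula −∫_Ω Δp v =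 ∫_Ω ∇v·∇p − ∫_Γ v ∇p·η, with the boundary integral over Γ written out explicitly over the four sides of the rectangle R with outward unit normal η.) -/
open MeasureTheory

/-- Partial derivative in the `x`-direction of `p : ℝ² → ℝ`. -/
noncomputable def pdx (p : ℝ × ℝ → ℝ) (z : ℝ × ℝ) : ℝ :=
  fderiv ℝ p z (1, 0)

/-- Partial derivative in the `y`-direction of `p : ℝ × ℝ → ℝ`. -/
noncomputable def pdy (p : ℝ × ℝ → ℝ) (z : ℝ × ℝ) : ℝ :=
  fderiv ℝ p z (0, 1)

/-- The Laplacian `∂²p/∂x² + ∂²p/∂y²` of `p : ℝ² → ℝ`. -/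
noncomputable def lap (p : ℝ × ℝ → ℝ) (z : ℝ × ℝ) : ℝ :=
  pdx (pdx p) z + pdy (pdy p) z

theorem greens_formula_rectangle
    (a₁ b₁ a₂ b₂ : ℝ) (h₁ : a₁ < b₁) (h₂ : a₂ < b₂)
    (p v : ℝ × ℝ → ℝ) (hp : ContDiff ℝ 2 p) (hv : ContDiff ℝ 1 v) :
    -∫ z in Set.Icc a₁ b₁ ×ˢ Set.Icc a₂ b₂, lap p z * v z =
      (∫ z in Set.Icc a₁ b₁ ×ˢ Set.Icc a₂ b₂, pdx v z * pdx p z + pdy v z * pdy p z) -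
        ((∫ y in a₂..b₂, v (b₁, y) * pdx p (b₁, y)) -
          (∫ y in a₂..b₂, v (a₁, y) * pdx p (a₁, y)) +
          (∫ x in a₁..b₁, v (x, b₂) * pdy p (x, b₂)) -
          (∫ x in a₁..b₁, v (x, a₂) * pdy p (x, a₂))) := by
  have hpd : ContDiff ℝ 1 (fun z => fderiv ℝ p z) :=
    hp.fderiv_right (by norm_num)
  have hpx : ContDiff ℝ 1 (pdx p) := hpd.clm_apply contDiff_const
  have hpy : ContDiff ℝ 1 (pdy p) := hpd.clm_apply contDiff_const
  set f : ℝ × ℝ → ℝ := fun z => v z * pdx p z with hf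
  set g : ℝ × ℝ → ℝ := fun z => v z * pdy p z with hg
  set f' : ℝ × ℝ → (ℝ × ℝ) →L[ℝ] ℝ :=
    fun z => v z • fderiv ℝ (pdx p) z + pdx p z • fderiv ℝ v z with hf'
  set g' : ℝ × ℝ → (ℝ × ℝ) →L[ℝ] ℝ :=
    fun z => v z • fderiv ℝ (pdy p) z + pdy p z • fderiv ℝ v z with hg'
  have hdf : ∀ z, HasFDerivAt f (f' z) z := fun z =>
    (hv.differentiable one_ne_zero z).hasFDerivAt.mul (hpx.differentiable one_ne_zero z).hasFDerivAt
  have hdg : ∀ z, HasFDerivAt g (g' z) z := fun z =>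
    (hv.differentiable one_ne_zero z).hasFDerivAt.mul (hpy.differentiable one_ne_zero z).hasFDerivAt
  have hkey : ∀ z, f' z (1, 0) + g' z (0, 1) =
      lap p z * v z + (pdx v z * pdx p z + pdy v z * pdy p z) := by
    intro z
    simp only [hf', hg', ContinuousLinearMap.add_apply, ContinuousLinearMap.smul_apply,
      smul_eq_mul, lap, pdx, pdy]
    ring
  have hcont : Continuous fun z => f' z (1, 0) + g' z (0, 1) := by
    have : Continuous fun z => lap p z * v z + (pdx v z * pdx p z + pdy v z * pdy p z) := by
      have hxx : Continuous (pdx (pdx p)) := (hpx.fderiv_right (m := 0) (by norm_num)).continuous.clm_apply continuous_const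
      have hyy : Continuous (pdy (pdy p)) := (hpy.fderiv_right (m := 0) (by norm_num)).continuous.clm_apply continuous_const
      have hvx : Continuous (pdx v) := (hv.fderiv_right (m := 0) (by norm_num)).continuous.clm_apply continuous_const
      have hvy : Continuous (pdy v) := (hv.fderiv_right (m := 0) (by norm_num)).continuous.clm_apply continuous_const
      exact ((hxx.add hyy).mul hv.continuous).add
        ((hvx.mul hpx.continuous).add (hvy.mul hpy.continuous))
    simpa only [hkey] using this
  have hcompact : IsCompact (Set.Icc a₁ b₁ ×ˢ Set.Icc a₂ b₂) :=
    isCompact_Icc.prod isCompact_Icc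
  have hIcc : Set.Icc a₁ b₁ ×ˢ Set.Icc a₂ b₂ = Set.Icc (a₁, a₂) (b₁, b₂) :=
    Set.Icc_prod_Icc _ _ _ _
  have hdiv := integral_divergence_prod_Icc_of_hasFDerivAt_off_countable_of_le
    f g f' g' (a₁, a₂) (b₁, b₂) ⟨h₁.le, h₂.le⟩ ∅ Set.countable_empty
    ((hv.continuous.mul hpx.continuous).continuousOn)
    ((hv.continuous.mul hpy.continuous).continuousOn)
    (fun z _ => hdf z) (fun z _ => hdg z)
    (by
      rw [← hIcc]
      exact hcont.continuousOn.integrableOn_compact hcompact)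
  rw [← hIcc] at hdiv
  have hsplit : ∫ z in Set.Icc a₁ b₁ ×ˢ Set.Icc a₂ b₂, f' z (1, 0) + g' z (0, 1) =
      (∫ z in Set.Icc a₁ b₁ ×ˢ Set.Icc a₂ b₂, lap p z * v z) +
        ∫ z in Set.Icc a₁ b₁ ×ˢ Set.Icc a₂ b₂, pdx v z * pdx p z + pdy v z * pdy p z := by
    rw [← integral_add]
    · exact setIntegral_congr_fun hcompact.measurableSet (fun z _ => hkey z)
    · have hxx : Continuous (pdx (pdx p)) := (hpx.fderiv_right (m := 0) (by norm_num)).continuous.clm_apply continuous_const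
      have hyy : Continuous (pdy (pdy p)) := (hpy.fderiv_right (m := 0) (by norm_num)).continuous.clm_apply continuous_const
      exact (((hxx.add hyy).mul hv.continuous).continuousOn.integrableOn_compact hcompact)
    · have hvx : Continuous (pdx v) := (hv.fderiv_right (m := 0) (by norm_num)).continuous.clm_apply continuous_const
      have hvy : Continuous (pdy v) := (hv.fderiv_right (m := 0) (by norm_num)).continuous.clm_apply continuous_const
      exact (((hvx.mul hpx.continuous).add (hvy.mul hpy.continuous)).continuousOn.integrableOn_compact hcompact)
  rw [hsplit] at hdiv
  simp only [hf, hg] at hdiv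
  linarith
end
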